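/- Let U and V be real Banach spaces, R : U → V twice continuously (Fréchet) differentiable on an open set containing the segment from ũ to u, R(u) = 0, ũ ≠ u, and R'(ũ) : U → V a continuous linear bijection with continuous inverse. Set u^C = ũ − R'(ũ)⁻¹ R(ũ), ẽ = u − ũ, e^C = u − u^C. If (1/2) · [ sup_{s ∈ [0,1]} ‖R'(ũ)⁻¹ ∘ R''(ũ + s ẽ)‖ ] · ‖ẽ‖ < 1, then ‖e^C‖ < ‖ẽ‖ (the corrector strictly reduces the error). -/
import Mathlib


/-- Linear error reduction: if `(1/2)·(sup_{s∈[0,1]} ‖R'(ut)⁻¹ ∘ R''(ut + s(u-ut))‖)·‖u-ut‖ < 1`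
then the corrector strictly reduces the error: `‖u - uC‖ < ‖u - ut‖`,
where `uC = ut - R'(ut)⁻¹ (R ut)` and `ut` plays the role of `ũ`. -/
theorem corrector_linear_error_reduction
    {U V : Type*} [NormedAddCommGroup U] [NormedSpace ℝ U] [CompleteSpace U]
    [NormedAddCommGroup V] [NormedSpace ℝ V] [CompleteSpace V]
    (R : U → V) (u ut : U) (s : Set U) (hs : IsOpen s)
    (hseg : segment ℝ ut u ⊆ s)
    (hR : ContDiffOn ℝ 2 R s)
    (hu : R u = 0) (hne : ut ≠ u)
    (A : U ≃L[ℝ] V) (hA : (A : U →L[ℝ] V) = fderiv ℝ R ut)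
    (hsmall :
      (1 / 2) *
        (⨆ t : Set.Icc (0 : ℝ) 1,
          ‖(ContinuousLinearMap.compL ℝ U V U (A.symm : V →L[ℝ] U)).comp
              (fderiv ℝ (fderiv ℝ R) (ut + (t : ℝ) • (u - ut)))‖) *
        ‖u - ut‖ < 1) :
    ‖u - (ut - A.symm (R ut))‖ < ‖u - ut‖ := by
  set e := u - ut with he
  have hepos : 0 < ‖e‖ := by
    rw [norm_pos_iff, he, sub_ne_zero]; exact (Ne.symm hne)
  set K := (⨆ t : Set.Icc (0 : ℝ) 1,
      ‖(ContinuousLinearMap.compL ℝ U V U (A.symm : V →L[ℝ] U)).comp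
          (fderiv ℝ (fderiv ℝ R) (ut + (t : ℝ) • (u - ut)))‖) with hK
  -- differentiability facts
  have h1 : ContDiffOn ℝ 1 (fderiv ℝ R) s := hR.fderiv_of_isOpen hs (by norm_num)
  have hdiff : ∀ x ∈ s, HasFDerivAt R (fderiv ℝ R x) x := fun x hx =>
    ((hR.differentiableOn (by norm_num)).differentiableAt (hs.mem_nhds hx)).hasFDerivAt
  have hdiff2 : ∀ x ∈ s, HasFDerivAt (fderiv ℝ R) (fderiv ℝ (fderiv ℝ R) x) x := fun x hx =>
    ((h1.differentiableOn (by norm_num)).differentiableAt (hs.mem_nhds hx)).hasFDerivAt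
  -- segment description
  have hsegeq : segment ℝ ut u = (fun t : ℝ => ut + t • e) '' Set.Icc 0 1 := by
    rw [segment_eq_image']
  have hmem : ∀ t ∈ Set.Icc (0:ℝ) 1, ut + t • e ∈ s := by
    intro t ht
    exact hseg (hsegeq ▸ ⟨t, ht, rfl⟩)
  -- K is an upper bound
  have hbdd : BddAbove (Set.range fun t : Set.Icc (0 : ℝ) 1 =>
      ‖(ContinuousLinearMap.compL ℝ U V U (A.symm : V →L[ℝ] U)).comp
          (fderiv ℝ (fderiv ℝ R) (ut + (t : ℝ) • (u - ut)))‖) := by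
    have hcont2 : ContinuousOn (fderiv ℝ (fderiv ℝ R)) s :=
      h1.continuousOn_fderiv_of_isOpen hs le_rfl
    have hc : Continuous fun t : Set.Icc (0 : ℝ) 1 =>
        ‖(ContinuousLinearMap.compL ℝ U V U (A.symm : V →L[ℝ] U)).comp
            (fderiv ℝ (fderiv ℝ R) (ut + (t : ℝ) • (u - ut)))‖ := by
      have hpath : Continuous fun t : Set.Icc (0 : ℝ) 1 =>
          fderiv ℝ (fderiv ℝ R) (ut + (t : ℝ) • (u - ut)) := by
        apply hcont2.comp_continuous
        · exact continuous_const.add ((continuous_subtype_val.smul continuous_const))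
        · intro t; exact hmem t t.2
      exact (continuous_const.clm_comp hpath).norm
    exact (isCompact_range hc).bddAbove
  -- the auxiliary map F x = A.symm ∘ R'(x)
  set F : U → (U →L[ℝ] U) := fun x => (A.symm : V →L[ℝ] U).comp (fderiv ℝ R x) with hF
  -- Lipschitz bound on F along the segment
  have hlip : ∀ w ∈ segment ℝ ut u, ‖F w - F ut‖ ≤ K * ‖w - ut‖ := by
    intro w hw
    refine (convex_segment ut u).norm_image_sub_le_of_norm_hasFDerivWithin_le
      (f' := fun x => (ContinuousLinearMap.compL ℝ U V U (A.symm : V →L[ℝ] U)).comp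
        (fderiv ℝ (fderiv ℝ R) x)) ?_ ?_ (left_mem_segment ℝ ut u) hw
    · intro x hx
      exact (((ContinuousLinearMap.compL ℝ U V U
        (A.symm : V →L[ℝ] U)).hasFDerivAt).comp x (hdiff2 x (hseg hx))).hasFDerivWithinAt
    · intro x hx
      rw [hsegeq] at hx
      obtain ⟨t, ht, rfl⟩ := hx
      exact le_ciSup hbdd ⟨t, ht⟩
  -- the Newton map and its derivative
  set N : U → U := fun x => x - A.symm (R x) with hNdef
  have hN : ∀ x ∈ s, HasFDerivAt N (F ut - F x) x := by
    intro x hx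
    have hid : F ut = ContinuousLinearMap.id ℝ U := by
      show (A.symm : V →L[ℝ] U).comp (fderiv ℝ R ut) = _
      rw [← hA]; ext y; simp
    have := (hasFDerivAt_id x).sub
      (((A.symm : V →L[ℝ] U).hasFDerivAt).comp x (hdiff x hx))
    rw [hid]
    exact this
  have hline : ∀ t : ℝ, HasDerivAt (fun t : ℝ => ut + t • e) e t := by
    intro t
    simpa using ((hasDerivAt_id t).smul_const e).const_add ut
  have hht : ∀ t ∈ Set.Icc (0:ℝ) 1,
      HasDerivAt (fun t : ℝ => N (ut + t • e)) ((F ut - F (ut + t • e)) e) t := by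
    intro t ht
    exact (hN _ (hmem t ht)).comp_hasDerivAt t (hline t)
  -- the fencing estimate
  have key : ∀ x ∈ Set.Icc (0:ℝ) 1,
      ‖N (ut + x • e) - N ut‖ ≤ K * ‖e‖ ^ 2 * (x ^ 2 / 2) := by
    refine image_norm_le_of_norm_deriv_right_le_deriv_boundary
      (f := fun t => N (ut + t • e) - N ut)
      (f' := fun t => (F ut - F (ut + t • e)) e)
      (B := fun t => K * ‖e‖ ^ 2 * (t ^ 2 / 2)) (B' := fun t => K * ‖e‖ ^ 2 * t)
      ?_ ?_ ?_ ?_ ?_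
    · intro t ht
      exact (((hht t ht).sub_const _)).continuousAt.continuousWithinAt
    · intro t ht
      exact ((hht t (Set.mem_Icc_of_Ico ht)).sub_const _).hasDerivWithinAt
    · simp
    · intro t
      have h2 : HasDerivAt (fun t : ℝ => t ^ 2 / 2) t t := by
        simpa using (hasDerivAt_pow 2 t).div_const 2
      exact h2.const_mul (K * ‖e‖ ^ 2)
    · intro t ht
      have hseg' : ut + t • e ∈ segment ℝ ut u := by
        rw [hsegeq]; exact ⟨t, Set.mem_Icc_of_Ico ht, rfl⟩
      calc ‖(F ut - F (ut + t • e)) e‖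
          ≤ ‖F ut - F (ut + t • e)‖ * ‖e‖ := (F ut - F (ut + t • e)).le_opNorm e
        _ = ‖F (ut + t • e) - F ut‖ * ‖e‖ := by rw [norm_sub_rev]
        _ ≤ K * ‖ut + t • e - ut‖ * ‖e‖ := by
            exact mul_le_mul_of_nonneg_right (hlip _ hseg') (norm_nonneg e)
        _ = K * ‖e‖ ^ 2 * t := by
            rw [add_sub_cancel_left, norm_smul, Real.norm_eq_abs, abs_of_nonneg ht.1]
            ring
  have key1 := key 1 ⟨zero_le_one, le_refl 1⟩
  have hu1 : ut + (1:ℝ) • e = u := by rw [one_smul, he]; abel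
  have hNu : N u = u := by rw [hNdef]; simp [hu]
  have hNut : N ut = ut - A.symm (R ut) := rfl
  rw [hu1, hNu, hNut] at key1
  calc ‖u - (ut - A.symm (R ut))‖ ≤ K * ‖e‖ ^ 2 * ((1:ℝ) ^ 2 / 2) := key1
    _ = (1 / 2 * K * ‖e‖) * ‖e‖ := by ring
    _ < 1 * ‖e‖ := mul_lt_mul_of_pos_right hsmall hepos
    _ = ‖u - ut‖ := by rw [one_mul, he]
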